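/- arXiv:1507.01431 — 2 statements merged into one kernel-verified Lean document; each statement's English description precedes it below -/
import Mathlib

section
/- For every 2-homogeneous polynomial P(x,y) = a·x² + b·xy + c·y² with real coefficients and every q ≥ 2, one has (|a|^q + |b|^q + |c|^q)^{1/q} ≤ 2^{1/q} · ‖P‖_∞, where ‖P‖_∞ = sup{|P(x,y)| : |x| ≤ 1, |y| ≤ 1}, and the constant 2^{1/q} is optimal. -/
/-- Sup norm of `a·x² + b·xy + c·y²` over the unit ball of `ℓ∞²`. -/

noncomputable def supNormInf (a b c : ℝ) : ℝ :=
  sSup {z : ℝ | ∃ x y : ℝ, |x| ≤ 1 ∧ |y| ≤ 1 ∧ z = |a * x ^ 2 + b * x * y + c * y ^ 2|}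

lemma sni_bdd (a b c : ℝ) :
    BddAbove {z : ℝ | ∃ x y : ℝ, |x| ≤ 1 ∧ |y| ≤ 1 ∧ z = |a * x ^ 2 + b * x * y + c * y ^ 2|} := by
  refine ⟨|a| + |b| + |c|, ?_⟩
  rintro z ⟨x, y, hx, hy, rfl⟩
  have h1 : |a * x ^ 2| ≤ |a| := by
    rw [abs_mul, abs_pow]
    calc |a| * |x| ^ 2 ≤ |a| * 1 := by
          have : |x| ^ 2 ≤ 1 := pow_le_one₀ (abs_nonneg x) hx
          exact mul_le_mul_of_nonneg_left this (abs_nonneg a)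
      _ = |a| := mul_one _
  have h2 : |b * x * y| ≤ |b| := by
    rw [abs_mul, abs_mul]
    have hxy : |x| * |y| ≤ 1 := mul_le_one₀ hx (abs_nonneg y) hy
    calc |b| * |x| * |y| = |b| * (|x| * |y|) := by ring
      _ ≤ |b| * 1 := mul_le_mul_of_nonneg_left hxy (abs_nonneg b)
      _ = |b| := mul_one _
  have h3 : |c * y ^ 2| ≤ |c| := by
    rw [abs_mul, abs_pow]
    have hy2 : |y| ^ 2 ≤ 1 := pow_le_one₀ (abs_nonneg y) hy
    calc |c| * |y| ^ 2 ≤ |c| * 1 := mul_le_mul_of_nonneg_left hy2 (abs_nonneg c)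
      _ = |c| := mul_one _
  calc |a * x ^ 2 + b * x * y + c * y ^ 2| ≤ |a * x ^ 2 + b * x * y| + |c * y ^ 2| := abs_add_le _ _
    _ ≤ |a * x ^ 2| + |b * x * y| + |c * y ^ 2| := by linarith [abs_add_le (a * x ^ 2) (b * x * y)]
    _ ≤ |a| + |b| + |c| := by linarith

lemma sni_le (a b c : ℝ) (x y : ℝ) (hx : |x| ≤ 1) (hy : |y| ≤ 1) :
    |a * x ^ 2 + b * x * y + c * y ^ 2| ≤ supNormInf a b c :=
  le_csSup (sni_bdd a b c) ⟨x, y, hx, hy, rfl⟩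

lemma sni_nonneg (a b c : ℝ) : 0 ≤ supNormInf a b c := by
  have := sni_le a b c 0 0 (by norm_num) (by norm_num)
  exact le_trans (abs_nonneg _) this


lemma amgm (M a c B : ℝ) (hB : 0 ≤ B) (h1 : B ≤ 4 * a * (M + c)) (h2 : B ≤ -(4 * c) * (M - a))
    (ha0 : 0 ≤ a) (hc : c ≤ 0) (hca : -a ≤ c) (haM : a ≤ M) : B ≤ 2 * M ^ 2 - a ^ 2 - c ^ 2 := by
  have hMa : 0 ≤ M - a := by linarith
  have hMc : 0 ≤ M + c := by linarith
  have hM0 : 0 ≤ M := by linarith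
  have hprod : B * B ≤ (4 * a * (M + c)) * (-(4 * c) * (M - a)) :=
    mul_le_mul h1 h2 hB (by positivity)
  have hfact : 0 ≤ (M - a) * (M + c) * ((M + a) * (M - c) - 4 * a * (-c)) := by
    have hA : 0 ≤ (M + a) * (M - c) - 4 * a * (-c) := by nlinarith
    exact mul_nonneg (mul_nonneg hMa hMc) hA
  have h4 : B * B ≤ 4 * ((M ^ 2 - a ^ 2) * (M ^ 2 - c ^ 2)) := by nlinarith [hprod, hfact]
  have hxy : 0 ≤ (M ^ 2 - a ^ 2) + (M ^ 2 - c ^ 2) := by nlinarith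
  have h6 : B ≤ (M ^ 2 - a ^ 2) + (M ^ 2 - c ^ 2) := by
    nlinarith [h4, sq_nonneg ((M ^ 2 - a ^ 2) - (M ^ 2 - c ^ 2)), hB, hxy]
  linarith

/-- Core estimate under normalization `0 ≤ b`, `|c| ≤ a`. -/
lemma keylem (M a b c : ℝ) (hb : 0 ≤ b) (hc1 : -a ≤ c) (hc2 : c ≤ a)
    (h : ∀ x y : ℝ, |x| ≤ 1 → |y| ≤ 1 → |a * x ^ 2 + b * x * y + c * y ^ 2| ≤ M) :
    a ^ 2 + b ^ 2 + c ^ 2 ≤ 2 * M ^ 2 := by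
  have ha0 : 0 ≤ a := by linarith
  have hA : |a| ≤ M := by
    have := h 1 0 (by norm_num) (by norm_num)
    simpa using this
  have haM : a ≤ M := le_trans (le_abs_self a) hA
  have hM0 : 0 ≤ M := le_trans (abs_nonneg a) hA
  have h11 : |a + b + c| ≤ M := by
    have := h 1 1 (by norm_num) (by norm_num)
    simpa using this
  have h1m1 : |a - b + c| ≤ M := by
    have := h 1 (-1) (by norm_num) (by norm_num)
    calc |a - b + c| = |a * 1 ^ 2 + b * 1 * (-1) + c * (-1) ^ 2| := by ring_nf
      _ ≤ M := this
  have hbM : b ≤ M := by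
    have h1 := (abs_le.mp h11).2
    have h2 := (abs_le.mp h1m1).1
    linarith
  rcases le_or_gt 0 c with hc | hc
  · -- all coefficients nonnegative
    have h1 := (abs_le.mp h11).2
    nlinarith [mul_nonneg ha0 hb, mul_nonneg hb hc, mul_nonneg ha0 hc]
  · rcases le_or_gt (-2 * c) b with hcase | hcase
    · -- b ≥ 2γ
      have h1 := (abs_le.mp h11).2
      nlinarith [mul_nonneg hb hM0, sq_nonneg (a + c), sq_nonneg (M - b)]
    · -- b < 2γ ≤ 2a : both vertices in range
      have hapos : 0 < a := by linarith
      -- vertex of x ↦ a x² + b x + c at x = -b/(2a)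
      have hx1 : |(-b) / (2 * a)| ≤ 1 := by
        rw [abs_div, abs_neg, abs_of_nonneg hb, abs_of_pos (by linarith : (0:ℝ) < 2 * a)]
        rw [div_le_one (by linarith)]
        linarith
      have hv1 := h ((-b) / (2 * a)) 1 hx1 (by norm_num)
      have he1 : a * ((-b) / (2 * a)) ^ 2 + b * ((-b) / (2 * a)) * 1 + c * 1 ^ 2
          = c - b ^ 2 / (4 * a) := by
        field_simp
        ring
      rw [he1] at hv1
      have hb2a : b ^ 2 ≤ 4 * a * (M + c) := by
        have h2 := (abs_le.mp hv1).1
        have : b ^ 2 / (4 * a) ≤ M + c := by linarith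
        rw [div_le_iff₀ (by linarith : (0:ℝ) < 4 * a)] at this
        linarith
      -- vertex of y ↦ c y² + b y + a at y = -b/(2c)
      have hy2 : |(-b) / (2 * c)| ≤ 1 := by
        rw [abs_div, abs_neg, abs_of_nonneg hb, abs_of_neg (by linarith : 2 * c < 0)]
        rw [div_le_one (by linarith)]
        linarith
      have hv2 := h 1 ((-b) / (2 * c)) (by norm_num) hy2
      have he2 : a * 1 ^ 2 + b * 1 * ((-b) / (2 * c)) + c * ((-b) / (2 * c)) ^ 2
          = a - b ^ 2 / (4 * c) := by
        have : c ≠ 0 := ne_of_lt hc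
        field_simp
        ring
      rw [he2] at hv2
      have hb2c : b ^ 2 ≤ (-(4 * c)) * (M - a) := by
        have h2 := (abs_le.mp hv2).2
        have hbb : -(b ^ 2 / (4 * c)) ≤ M - a := by linarith
        have : b ^ 2 / (-(4 * c)) ≤ M - a := by rw [div_neg]; linarith
        rw [div_le_iff₀ (by linarith : (0:ℝ) < -(4 * c))] at this
        linarith
      have := amgm M a c (b ^ 2) (sq_nonneg b) (by linarith [hb2a]) hb2c ha0 (le_of_lt hc) hc1 haM
      linarith



lemma core_absa (M a b c : ℝ) (hb : 0 ≤ b) (hca : |c| ≤ |a|)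
    (h : ∀ x y : ℝ, |x| ≤ 1 → |y| ≤ 1 → |a * x ^ 2 + b * x * y + c * y ^ 2| ≤ M) :
    a ^ 2 + b ^ 2 + c ^ 2 ≤ 2 * M ^ 2 := by
  rcases le_or_gt 0 a with ha | ha
  · have h' : |c| ≤ a := by rwa [abs_of_nonneg ha] at hca
    exact keylem M a b c hb (abs_le.mp h').1 (abs_le.mp h').2 h
  · have h' : |c| ≤ -a := by rwa [abs_of_neg ha] at hca
    have hc1 := (abs_le.mp h').1
    have hc2 := (abs_le.mp h').2
    have key := keylem M (-a) b (-c) hb (by linarith) (by linarith) ?_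
    · nlinarith [key]
    · intro x y hx hy
      have := h (-x) y (by rwa [abs_neg]) hy
      have e : -a * x ^ 2 + b * x * y + -c * y ^ 2 = -(a * (-x) ^ 2 + b * (-x) * y + c * y ^ 2) := by
        ring
      rw [e, abs_neg]
      exact this

lemma core_b (M a b c : ℝ) (hb : 0 ≤ b)
    (h : ∀ x y : ℝ, |x| ≤ 1 → |y| ≤ 1 → |a * x ^ 2 + b * x * y + c * y ^ 2| ≤ M) :
    a ^ 2 + b ^ 2 + c ^ 2 ≤ 2 * M ^ 2 := by
  rcases le_total |c| |a| with hca | hca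
  · exact core_absa M a b c hb hca h
  · have key := core_absa M c b a hb hca ?_
    · linarith
    · intro x y hx hy
      have := h y x hy hx
      have e : c * x ^ 2 + b * x * y + a * y ^ 2 = a * y ^ 2 + b * y * x + c * x ^ 2 := by ring
      rw [e]
      exact this

lemma core2 (M a b c : ℝ)
    (h : ∀ x y : ℝ, |x| ≤ 1 → |y| ≤ 1 → |a * x ^ 2 + b * x * y + c * y ^ 2| ≤ M) :
    a ^ 2 + b ^ 2 + c ^ 2 ≤ 2 * M ^ 2 := by
  rcases le_total 0 b with hb | hb
  · exact core_b M a b c hb h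
  · have key := core_b M a (-b) c (by linarith) ?_
    · nlinarith [key]
    · intro x y hx hy
      have := h x (-y) hx (by rwa [abs_neg])
      have e : a * x ^ 2 + -b * x * y + c * y ^ 2 = a * x ^ 2 + b * x * (-y) + c * (-y) ^ 2 := by
        ring
      rw [e]
      exact this

/-- interpolation step -/
lemma interp (q M r : ℝ) (hq : 2 ≤ q) (hr : |r| ≤ M) :
    |r| ^ q ≤ M ^ (q - 2) * r ^ 2 := by
  rcases eq_or_lt_of_le (abs_nonneg r) with h0 | h0
  · have hr0 : r = 0 := abs_eq_zero.mp h0.symm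
    rw [hr0]
    have : |(0:ℝ)| ^ q = 0 := by
      rw [abs_zero, Real.zero_rpow (by linarith : q ≠ 0)]
    rw [this]
    have hM0 : 0 ≤ M := le_trans (abs_nonneg r) hr
    positivity
  · have hM0 : 0 < M := lt_of_lt_of_le h0 hr
    have e1 : |r| ^ q = |r| ^ (q - 2) * |r| ^ (2:ℝ) := by
      rw [← Real.rpow_add h0]
      ring_nf
    have e2 : |r| ^ (2:ℝ) = r ^ 2 := by
      rw [show (2:ℝ) = ((2:ℕ):ℝ) by norm_num, Real.rpow_natCast, sq_abs]
    rw [e1, e2]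
    have h3 : |r| ^ (q - 2) ≤ M ^ (q - 2) :=
      Real.rpow_le_rpow (abs_nonneg r) hr (by linarith)
    exact mul_le_mul_of_nonneg_right h3 (sq_nonneg r)

theorem stmt3 (q : ℝ) (hq : 2 ≤ q) :
    (∀ a b c : ℝ,
      (|a| ^ q + |b| ^ q + |c| ^ q) ^ (1 / q) ≤ (2 : ℝ) ^ (1 / q) * supNormInf a b c) ∧
    (|(1 : ℝ)| ^ q + |(0 : ℝ)| ^ q + |(-1 : ℝ)| ^ q) ^ (1 / q) =
      (2 : ℝ) ^ (1 / q) * supNormInf 1 0 (-1) := by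
  have hq0 : 0 < q := by linarith
  constructor
  · intro a b c
    set M := supNormInf a b c with hMdef
    have hM0 : 0 ≤ M := sni_nonneg a b c
    have hsq : a ^ 2 + b ^ 2 + c ^ 2 ≤ 2 * M ^ 2 := core2 M a b c (sni_le a b c)
    have hA : |a| ≤ M := by
      have := sni_le a b c 1 0 (by norm_num) (by norm_num)
      simpa using this
    have hC : |c| ≤ M := by
      have := sni_le a b c 0 1 (by norm_num) (by norm_num)
      simpa using this
    have hB : |b| ≤ M := by
      have h1 := sni_le a b c 1 1 (by norm_num) (by norm_num)
      have h2 := sni_le a b c 1 (-1) (by norm_num) (by norm_num)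
      rw [← hMdef] at h1 h2
      norm_num at h1 h2
      rw [abs_le] at h1 h2 ⊢
      constructor <;> [linarith [h1.1, h2.2]; linarith [h1.2, h2.1]]
    rcases eq_or_lt_of_le hM0 with hM | hM
    · have ha0 : a = 0 := abs_eq_zero.mp (le_antisymm (by linarith) (abs_nonneg a))
      have hb0 : b = 0 := abs_eq_zero.mp (le_antisymm (by linarith) (abs_nonneg b))
      have hc0 : c = 0 := abs_eq_zero.mp (le_antisymm (by linarith) (abs_nonneg c))
      rw [ha0, hb0, hc0, ← hM]
      simp [Real.zero_rpow (ne_of_gt hq0), Real.zero_rpow (inv_ne_zero (ne_of_gt hq0))]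
    · have key2 : |a| ^ q + |b| ^ q + |c| ^ q ≤ 2 * M ^ q := by
        have ia := interp q M a hq hA
        have ib := interp q M b hq hB
        have ic := interp q M c hq hC
        have hsum : |a| ^ q + |b| ^ q + |c| ^ q ≤ M ^ (q - 2) * (a ^ 2 + b ^ 2 + c ^ 2) := by
          rw [mul_add, mul_add]
          linarith
        have h2 : M ^ (q - 2) * (a ^ 2 + b ^ 2 + c ^ 2) ≤ M ^ (q - 2) * (2 * M ^ 2) :=
          mul_le_mul_of_nonneg_left hsq (by positivity)
        have h3 : M ^ (q - 2) * (2 * M ^ 2) = 2 * M ^ q := by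
          have : M ^ (q - 2) * M ^ (2:ℝ) = M ^ q := by
            rw [← Real.rpow_add hM]; ring_nf
          have e2 : M ^ (2:ℝ) = M ^ 2 := by
            rw [show (2:ℝ) = ((2:ℕ):ℝ) by norm_num, Real.rpow_natCast]
          rw [← e2]; nlinarith [this]
        linarith
      calc (|a| ^ q + |b| ^ q + |c| ^ q) ^ (1 / q) ≤ (2 * M ^ q) ^ (1 / q) := by
            apply Real.rpow_le_rpow (by positivity) key2 (by positivity)
        _ = 2 ^ (1 / q) * (M ^ q) ^ (1 / q) := Real.mul_rpow (by norm_num) (by positivity)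
        _ = 2 ^ (1 / q) * M := by
            rw [← Real.rpow_mul hM0, mul_one_div, div_self (ne_of_gt hq0), Real.rpow_one]
  · have hsni : supNormInf 1 0 (-1) = 1 := by
      apply le_antisymm
      · apply Real.sSup_le
        · rintro z ⟨x, y, hx, hy, rfl⟩
          have hx2 : x ^ 2 ≤ 1 := by nlinarith [sq_abs x, abs_nonneg x]
          have hy2 : y ^ 2 ≤ 1 := by nlinarith [sq_abs y, abs_nonneg y]
          rw [abs_le]
          constructor <;> nlinarith [sq_nonneg x, sq_nonneg y]
        · norm_num
      · apply le_csSup (sni_bdd 1 0 (-1))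
        exact ⟨1, 0, by norm_num⟩
    rw [hsni, abs_one, abs_neg, abs_one, abs_zero, Real.one_rpow,
      Real.zero_rpow (ne_of_gt hq0), mul_one]
    norm_num
end

section
/- For every 2-homogeneous polynomial P(x,y) = a·x² + b·xy + c·y² with real coefficients, max{|a|, |b|, |c|} ≤ 4 · ‖P‖_1, where ‖P‖_1 = sup{|P(x,y)| : |x| + |y| ≤ 1}. The constant 4 is optimal, attained by P(x,y) = 4xy. -/
/-- Sup norm of `a·x² + b·xy + c·y²` over the unit ball of `ℓ₁²`. -/
noncomputable def supNormOne (a b c : ℝ) : ℝ :=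
  sSup {z : ℝ | ∃ x y : ℝ, |x| + |y| ≤ 1 ∧ z = |a * x ^ 2 + b * x * y + c * y ^ 2|}

lemma supNormOne_bdd (a b c : ℝ) :
    BddAbove {z : ℝ | ∃ x y : ℝ, |x| + |y| ≤ 1 ∧ z = |a * x ^ 2 + b * x * y + c * y ^ 2|} := by
  refine ⟨|a| + |b| + |c|, ?_⟩
  rintro z ⟨x, y, hxy, rfl⟩
  have hx : |x| ≤ 1 := by have := abs_nonneg y; linarith
  have hy : |y| ≤ 1 := by have := abs_nonneg x; linarith
  calc |a * x ^ 2 + b * x * y + c * y ^ 2|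
      ≤ |a * x ^ 2| + |b * x * y| + |c * y ^ 2| := by
        exact (abs_add_le _ _).trans (by gcongr; exact abs_add_le _ _)
    _ ≤ |a| + |b| + |c| := by
        have hx0 := abs_nonneg x
        have hy0 := abs_nonneg y
        have h1 : |a * x ^ 2| ≤ |a| := by
          rw [abs_mul, abs_pow]
          nlinarith [mul_nonneg (abs_nonneg a) (show (0:ℝ) ≤ 1 - |x| ^ 2 by nlinarith)]
        have h2 : |b * x * y| ≤ |b| := by
          rw [abs_mul, abs_mul]
          nlinarith [mul_nonneg (abs_nonneg b) (show (0:ℝ) ≤ 1 - |x| * |y| by nlinarith)]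
        have h3 : |c * y ^ 2| ≤ |c| := by
          rw [abs_mul, abs_pow]
          nlinarith [mul_nonneg (abs_nonneg c) (show (0:ℝ) ≤ 1 - |y| ^ 2 by nlinarith)]
        linarith

lemma supNormOne_le_point (a b c x y : ℝ) (h : |x| + |y| ≤ 1) :
    |a * x ^ 2 + b * x * y + c * y ^ 2| ≤ supNormOne a b c :=
  le_csSup (supNormOne_bdd a b c) ⟨x, y, h, rfl⟩

theorem stmt6 :
    (∀ a b c : ℝ, max (max |a| |b|) |c| ≤ 4 * supNormOne a b c) ∧
    max (max |(0 : ℝ)| |(4 : ℝ)|) |(0 : ℝ)| = 4 * supNormOne 0 4 0 := by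
  constructor
  · intro a b c
    have h0 : (0 : ℝ) ≤ supNormOne a b c := by
      have := supNormOne_le_point a b c 0 0 (by norm_num)
      simpa using this.trans_eq' (by norm_num)
    have ha : |a| ≤ supNormOne a b c := by
      have := supNormOne_le_point a b c 1 0 (by norm_num)
      simpa using this
    have hc : |c| ≤ supNormOne a b c := by
      have := supNormOne_le_point a b c 0 1 (by norm_num)
      simpa using this
    have h1 := supNormOne_le_point a b c (1/2) (1/2) (by rw [abs_of_nonneg] <;> norm_num)
    have h2 := supNormOne_le_point a b c (1/2) (-(1/2)) (by rw [abs_neg, abs_of_nonneg] <;> norm_num)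
    have h1'' := abs_le.mp h1
    have h2'' := abs_le.mp h2
    have hb : |b| ≤ 4 * supNormOne a b c := by
      rw [abs_le]
      constructor <;> nlinarith [h1''.1, h1''.2, h2''.1, h2''.2]
    simp only [max_le_iff]
    exact ⟨⟨by linarith, hb⟩, by linarith⟩
  · have heq : supNormOne 0 4 0 = 1 := by
      unfold supNormOne
      apply le_antisymm
      · have hne : {z : ℝ | ∃ x y : ℝ, |x| + |y| ≤ 1 ∧
            z = |0 * x ^ 2 + 4 * x * y + 0 * y ^ 2|}.Nonempty :=
          ⟨0, 0, 0, by norm_num, by norm_num⟩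
        apply csSup_le hne
        rintro z ⟨x, y, hxy, rfl⟩
        have h : |0 * x ^ 2 + 4 * x * y + 0 * y ^ 2| = 4 * (|x| * |y|) := by
          rw [show (0:ℝ) * x ^ 2 + 4 * x * y + 0 * y ^ 2 = 4 * (x * y) by ring,
            abs_mul, abs_mul]
          norm_num
        rw [h]
        nlinarith [sq_nonneg (|x| - |y|), abs_nonneg x, abs_nonneg y]
      · have := supNormOne_le_point 0 4 0 (1/2) (1/2) (by rw [abs_of_nonneg] <;> norm_num)
        unfold supNormOne at this
        calc (1:ℝ) = |0 * (1/2:ℝ) ^ 2 + 4 * (1/2) * (1/2) + 0 * (1/2) ^ 2| := by norm_num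
          _ ≤ _ := this
    rw [heq]; norm_num
end
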